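/- arXiv:1601.04551 — 5 statements merged into one kernel-verified Lean document; each statement's English description precedes it below -/
import Mathlib

section
/- Let mu : G × H -> K be a graph homomorphism of graphs, let h0h1 be an edge of H, and suppose that for every odd closed walk C in G there exists an edge gg' on C such that mu(g,h0)mu(g',h0) is an edge of K and mu(g,h1)mu(g',h1) is an edge of K. Then there exists a graph homomorphism G -> K. -/
open SimpleGraph

variable {α β γ : Type*}

/-- Tensor (categorical) product of simple graphs. -/
def tensor (G : SimpleGraph α) (H : SimpleGraph β) : SimpleGraph (α × β) where
  Adj x y := G.Adj x.1 y.1 ∧ H.Adj x.2 y.2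
  symm := ⟨fun _ _ ⟨h1, h2⟩ => ⟨h1.symm, h2.symm⟩⟩
  loopless := ⟨fun x ⟨h1, _⟩ => G.loopless.irrefl x.1 h1⟩

/-- Projection of a walk in the tensor product to the first factor. -/
def projG {G : SimpleGraph α} {H : SimpleGraph β} :
    ∀ {x y : α × β}, (tensor G H).Walk x y → G.Walk x.1 y.1
  | _, _, SimpleGraph.Walk.nil => SimpleGraph.Walk.nil
  | _, _, SimpleGraph.Walk.cons h p => SimpleGraph.Walk.cons h.1 (projG p)

/-- Projection of a walk in the tensor product to the second factor. -/
def projH {G : SimpleGraph α} {H : SimpleGraph β} :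
    ∀ {x y : α × β}, (tensor G H).Walk x y → H.Walk x.2 y.2
  | _, _, SimpleGraph.Walk.nil => SimpleGraph.Walk.nil
  | _, _, SimpleGraph.Walk.cons h p => SimpleGraph.Walk.cons h.2 (projH p)

/-- One-step reduction: deleting a consecutive backtracking pair `e, e⁻¹`. -/
inductive RedStep (G : SimpleGraph α) : ∀ {u v : α}, G.Walk u v → G.Walk u v → Prop
  | cancel {u v a b : α} (h : G.Adj a b) (p : G.Walk u a) (q : G.Walk a v) :
      RedStep G (p.append (SimpleGraph.Walk.cons h (SimpleGraph.Walk.cons h.symm q)))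
        (p.append q)

/-- A walk is reduced if no backtracking cancellation applies to it. -/
def Reduced {G : SimpleGraph α} {u v : α} (W : G.Walk u v) : Prop :=
  ∀ W', ¬ RedStep G W W'

/-- Homotopy of walks: equivalence generated by cancellations. -/
def RedEquiv (G : SimpleGraph α) {u v : α} (W W' : G.Walk u v) : Prop :=
  Relation.EqvGen (fun p q => RedStep G p q) W W'

/-- One elementary step of square-equivalence. -/
inductive SqStep (G : SimpleGraph α) : ∀ {u v : α}, G.Walk u v → G.Walk u v → Prop
  | cancel {u v a b : α} (h : G.Adj a b) (p : G.Walk u a) (q : G.Walk a v) :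
      SqStep G (p.append (SimpleGraph.Walk.cons h (SimpleGraph.Walk.cons h.symm q)))
        (p.append q)
  | square {u v a b c d : α} (hab : G.Adj a b) (hbc : G.Adj b c) (had : G.Adj a d)
      (hdc : G.Adj d c) (p : G.Walk u a) (q : G.Walk c v) :
      SqStep G (p.append (SimpleGraph.Walk.cons hab (SimpleGraph.Walk.cons hbc q)))
        (p.append (SimpleGraph.Walk.cons had (SimpleGraph.Walk.cons hdc q)))

/-- Square-equivalence of walks. -/
def SqEquiv (G : SimpleGraph α) {u v : α} (W W' : G.Walk u v) : Prop :=
  Relation.EqvGen (fun p q => SqStep G p q) W W'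

/-- Natural-number power of a closed walk (iterated concatenation). -/
def wpow {G : SimpleGraph α} {u : α} (W : G.Walk u u) : ℕ → G.Walk u u
  | 0 => SimpleGraph.Walk.nil
  | n + 1 => W.append (wpow W n)

/-- Integer power of a closed walk. -/
def wzpow {G : SimpleGraph α} {u : α} (W : G.Walk u u) : ℤ → G.Walk u u
  | Int.ofNat n => wpow W n
  | Int.negSucc n => wpow W.reverse (n + 1)

/-- A walk `p` is a prefix of `q` (same starting vertex). -/
def WalkPrefix {G : SimpleGraph α} {u x y : α} (p : G.Walk u x) (q : G.Walk u y) : Prop :=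
  ∃ r : G.Walk x y, q = p.append r

/-- `K` is square-free: every square is trivial. -/
def SqFree (K : SimpleGraph γ) : Prop :=
  ∀ a b c d : γ, K.Adj a b → K.Adj b c → K.Adj c d → K.Adj d a → a = c ∨ b = d

/-- The circular clique `K_{p/q}` on `ZMod p`. -/
def circClique (p q : ℕ) : SimpleGraph (ZMod p) where
  Adj i j := i ≠ j ∧ ∃ k : ℕ, q ≤ k ∧ k ≤ p - q ∧ (j = i + (k : ZMod p) ∨ i = j + (k : ZMod p))
  symm := by
    constructor
    rintro i j ⟨hne, k, h1, h2, h3 | h3⟩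
    · exact ⟨hne.symm, k, h1, h2, Or.inr h3⟩
    · exact ⟨hne.symm, k, h1, h2, Or.inl h3⟩
  loopless := ⟨fun i h => h.1 rfl⟩



lemma getVert_mapLe {G G' : SimpleGraph α} (h : G ≤ G') {u v : α} (p : G.Walk u v) (i : ℕ) :
    (p.mapLe h).getVert i = p.getVert i := by
  induction p generalizing i with
  | nil => rfl
  | cons ha p ih =>
    cases i with
    | zero => rfl
    | succ n => simpa using ih n

lemma length_mapLe' {G G' : SimpleGraph α} (h : G ≤ G') {u v : α} (p : G.Walk u v) :
    (p.mapLe h).length = p.length := SimpleGraph.Walk.length_map _ _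

lemma two_color {G' : SimpleGraph α}
    (hev : ∀ (u : α) (C : G'.Walk u u), ¬ Odd C.length) :
    ∃ c : α → Bool, ∀ g g', G'.Adj g g' → c g ≠ c g' := by
  classical
  have hrep : ∀ c : G'.ConnectedComponent, ∃ v, G'.connectedComponentMk v = c :=
    fun c => Quot.exists_rep c
  set rep : G'.ConnectedComponent → α := fun c => (hrep c).choose with hrepdef
  have hreach : ∀ g : α, G'.Reachable (rep (G'.connectedComponentMk g)) g := by
    intro g
    exact ConnectedComponent.exact ((hrep (G'.connectedComponentMk g)).choose_spec)
  set w : ∀ g : α, G'.Walk (rep (G'.connectedComponentMk g)) g :=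
    fun g => (hreach g).some with hwdef
  refine ⟨fun g => decide (Odd (w g).length), ?_⟩
  intro g g' hadj hc
  have hcc : G'.connectedComponentMk g' = G'.connectedComponentMk g :=
    ConnectedComponent.sound hadj.symm.reachable
  have hr : rep (G'.connectedComponentMk g') = rep (G'.connectedComponentMk g) := by rw [hcc]
  set w2 : G'.Walk (rep (G'.connectedComponentMk g)) g' := (w g').copy hr rfl with hw2
  have hW := hev _ ((w g).append (SimpleGraph.Walk.cons hadj w2.reverse))
  rw [SimpleGraph.Walk.length_append, SimpleGraph.Walk.length_cons,
    SimpleGraph.Walk.length_reverse] at hW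
  have hlen : w2.length = (w g').length := SimpleGraph.Walk.length_copy _ _ _
  simp only [decide_eq_decide] at hc
  rw [hlen] at hW
  rw [Nat.odd_iff] at hW
  rw [Nat.odd_iff, Nat.odd_iff] at hc
  omega

/-- if every odd closed walk of `G` has an edge `gg'` whose two copies
`(g,h0)(g',h0)` and `(g,h1)(g',h1)` map to edges of `K` under `mu : G × H → K`,
then `G` admits a homomorphism to `K`. -/
theorem hom_of_odd_walk_edges {G : SimpleGraph α} {H : SimpleGraph β} {K : SimpleGraph γ}
    (mu : tensor G H →g K) {h0 h1 : β} (hE : H.Adj h0 h1)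
    (hodd : ∀ (u : α) (C : G.Walk u u), Odd C.length →
      ∃ i < C.length,
        K.Adj (mu (C.getVert i, h0)) (mu (C.getVert (i + 1), h0)) ∧
        K.Adj (mu (C.getVert i, h1)) (mu (C.getVert (i + 1), h1))) :
    Nonempty (G →g K) := by
  classical
  -- the subgraph of "bad" edges
  set G' : SimpleGraph α :=
    { Adj := fun g g' => G.Adj g g' ∧
        ¬ (K.Adj (mu (g, h0)) (mu (g', h0)) ∧ K.Adj (mu (g, h1)) (mu (g', h1)))
      symm := by
        constructor
        rintro g g' ⟨ha, hb⟩
        exact ⟨ha.symm, fun ⟨h1', h2'⟩ => hb ⟨h1'.symm, h2'.symm⟩⟩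
      loopless := ⟨fun g ⟨ha, _⟩ => G.loopless.irrefl g ha⟩ } with hG'
  have hle : G' ≤ G := fun g g' h => h.1
  -- no odd closed walk in G'
  have hev : ∀ (u : α) (C : G'.Walk u u), ¬ Odd C.length := by
    intro u C hoddlen
    obtain ⟨i, hi, hK0, hK1⟩ := hodd u (C.mapLe hle) (by
      rwa [length_mapLe' hle C])
    rw [getVert_mapLe, getVert_mapLe] at hK0 hK1
    have hadj : G'.Adj (C.getVert i) (C.getVert (i + 1)) :=
      C.adj_getVert_succ (by rwa [length_mapLe' hle C] at hi)
    exact hadj.2 ⟨hK0, hK1⟩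
  obtain ⟨c, hc⟩ := two_color hev
  refine ⟨⟨fun g => mu (g, if c g then h0 else h1), ?_⟩⟩
  intro g g' hadj
  by_cases hbad : K.Adj (mu (g, h0)) (mu (g', h0)) ∧ K.Adj (mu (g, h1)) (mu (g', h1))
  · by_cases hcg : c g
    · by_cases hcg' : c g'
      · simpa [hcg, hcg'] using hbad.1
      · simpa [hcg, hcg'] using mu.map_adj (show (tensor G H).Adj (g, h0) (g', h1) from ⟨hadj, hE⟩)
    · by_cases hcg' : c g'
      · simpa [hcg, hcg'] using mu.map_adj (show (tensor G H).Adj (g, h1) (g', h0) from ⟨hadj, hE.symm⟩)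
      · simpa [hcg, hcg'] using hbad.2
  · have hne := hc g g' ⟨hadj, hbad⟩
    by_cases hcg : c g
    · have hcg' : c g' = false := by
        cases h' : c g' <;> simp_all
      simpa [hcg, hcg'] using mu.map_adj (show (tensor G H).Adj (g, h0) (g', h1) from ⟨hadj, hE⟩)
    · have hcg' : c g' = true := by
        cases h' : c g' <;> simp_all
      simpa [hcg, hcg'] using mu.map_adj (show (tensor G H).Adj (g, h1) (g', h0) from ⟨hadj, hE.symm⟩)
end

section
/- Let K' be the Cayley graph of Z_{2p} with connection set {±1, ±3, ..., ±(p-2q)} (all odd residues of absolute value at most p-2q), where 2 < p/q < 4. Define, for a walk W in K' with consecutive vertices w_0, ..., w_n, the winding sum Δ(W) = Σ_i d(w_{i+1} - w_i), where d(x) is the unique representative of x mod 2p in {-(p-1), ..., p}. Then Δ is invariant under square-equivalence: if W ~ W' then Δ(W) = Δ(W'). Moreover Δ is additive under concatenation. -/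
open SimpleGraph

variable {α β γ : Type*}

/-- The representative of `x : ZMod (2p)` in `{-(p-1), …, p}`. -/
def dd (p : ℕ) (x : ZMod (2 * p)) : ℤ :=
  if (x.val : ℤ) ≤ (p : ℤ) then (x.val : ℤ) else (x.val : ℤ) - 2 * p

/-- The Cayley graph `K'` of `ZMod (2p)` with connection set the odd residues of
absolute value at most `p - 2q`. -/
def cayleyOdd (p q : ℕ) : SimpleGraph (ZMod (2 * p)) where
  Adj u v := u ≠ v ∧ ∃ s : ℤ, Odd s ∧ s.natAbs ≤ p - 2 * q ∧ v - u = (s : ZMod (2 * p))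
  symm := by
    constructor
    rintro u v ⟨hne, s, hodd, habs, hs⟩
    refine ⟨hne.symm, -s, hodd.neg, by simpa using habs, ?_⟩
    push_cast
    rw [← hs]; ring
  loopless := ⟨fun u h => h.1 rfl⟩

/-- The winding sum `Δ(W) = Σᵢ d(w_{i+1} - w_i)` of a walk in `K'`. -/
def winding (p q : ℕ) {u v : ZMod (2 * p)} (W : (cayleyOdd p q).Walk u v) : ℤ :=
  (W.darts.map (fun d => dd p (d.toProd.2 - d.toProd.1))).sum


section Aux

lemma natAbs_bounds {p q : ℕ} (hq : 0 < q) (h2 : 2 * q < p) {s : ℤ}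
    (habs : s.natAbs ≤ p - 2 * q) : -(p : ℤ) < s ∧ s < (p : ℤ) := by
  zify [Nat.le_of_lt h2] at habs
  have h3 := abs_le.mp habs
  omega

lemma dd_eq_of_bounds {p q : ℕ} (hq : 0 < q) (h2 : 2 * q < p) {s : ℤ}
    (habs : s.natAbs ≤ p - 2 * q) : dd p (s : ZMod (2 * p)) = s := by
  haveI : NeZero (2 * p) := ⟨by omega⟩
  have hv : (((s : ZMod (2 * p)).val : ℤ)) = s % (2 * p) := by
    have := ZMod.val_intCast (n := 2 * p) s
    push_cast at this ⊢
    omega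
  have hrange := natAbs_bounds hq h2 habs
  have hmod : s % (2 * (p : ℤ)) = s ∨ s % (2 * (p : ℤ)) = s + 2 * p := by
    rcases le_or_gt 0 s with h | h
    · left; exact Int.emod_eq_of_lt h (by omega)
    · right
      have h1 : (s + 2 * (p : ℤ)) % (2 * (p : ℤ)) = s % (2 * p) := by
        simpa using Int.add_mul_emod_self_left (a := s) (b := 2 * (p : ℤ)) (c := 1)
      have h2' : (s + 2 * p) % (2 * (p : ℤ)) = s + 2 * p :=
        Int.emod_eq_of_lt (by omega) (by omega)
      omega
  unfold dd
  rw [hv]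
  split <;> omega

lemma dd_cast {p : ℕ} (hp : 0 < p) (x : ZMod (2 * p)) :
    ((dd p x : ℤ) : ZMod (2 * p)) = x := by
  haveI : NeZero (2 * p) := ⟨by omega⟩
  have h0 : ((2 * p : ℕ) : ZMod (2 * p)) = 0 := ZMod.natCast_self _
  push_cast at h0
  unfold dd
  split <;> push_cast <;>
    simp [ZMod.natCast_val, ZMod.cast_id, h0, sub_eq_self]

lemma dd_edge {p q : ℕ} (hq : 0 < q) (h2 : 2 * q < p) {u v : ZMod (2 * p)}
    (h : (cayleyOdd p q).Adj u v) :
    (dd p (v - u)).natAbs ≤ p - 2 * q := by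
  obtain ⟨-, s, -, habs, hs⟩ := h
  rw [hs, dd_eq_of_bounds hq h2 habs]
  exact habs

lemma zmod_eq_of_bounds {p q : ℕ} (h2 : 2 * q < p) (h4 : p < 4 * q) {x y : ℤ}
    (hx : x.natAbs ≤ 2 * (p - 2 * q)) (hy : y.natAbs ≤ 2 * (p - 2 * q))
    (h : (x : ZMod (2 * p)) = (y : ZMod (2 * p))) : x = y := by
  haveI : NeZero (2 * p) := ⟨by omega⟩
  have hd : ((2 * p : ℕ) : ℤ) ∣ (x - y) := by
    rw [← ZMod.intCast_zmod_eq_zero_iff_dvd]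
    push_cast
    rw [h]; ring
  have h0 : x - y = 0 := Int.eq_zero_of_abs_lt_dvd hd (by
    rw [abs_lt]; push_cast; omega)
  omega

lemma winding_append' (p q : ℕ) {u v w : ZMod (2 * p)} (W : (cayleyOdd p q).Walk u v)
    (W' : (cayleyOdd p q).Walk v w) :
    winding p q (W.append W') = winding p q W + winding p q W' := by
  simp [winding, SimpleGraph.Walk.darts_append]

lemma winding_cons (p q : ℕ) {u v w : ZMod (2 * p)} (h : (cayleyOdd p q).Adj u v)
    (W : (cayleyOdd p q).Walk v w) :
    winding p q (SimpleGraph.Walk.cons h W) = dd p (v - u) + winding p q W := by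
  simp [winding]

lemma winding_sqstep {p q : ℕ} (hq : 0 < q) (h2 : 2 * q < p) (h4 : p < 4 * q)
    {u v : ZMod (2 * p)} {W W' : (cayleyOdd p q).Walk u v}
    (h : SqStep (cayleyOdd p q) W W') : winding p q W = winding p q W' := by
  have hp : 0 < p := by omega
  induction h with
  | @cancel a b hab pw qw =>
    rw [winding_append', winding_append', winding_cons, winding_cons]
    have key : dd p (b - a) + dd p (a - b) = 0 := by
      apply zmod_eq_of_bounds h2 h4
      · have h1 := dd_edge hq h2 hab
        have h2' := dd_edge hq h2 hab.symm
        omega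
      · simp
      · push_cast
        rw [dd_cast hp, dd_cast hp]
        push_cast
        ring
    omega
  | @square a b c d hab hbc had hdc pw qw =>
    rw [winding_append', winding_append', winding_cons, winding_cons,
        winding_cons, winding_cons]
    have key : dd p (b - a) + dd p (c - b) = dd p (d - a) + dd p (c - d) := by
      apply zmod_eq_of_bounds h2 h4
      · have h1 := dd_edge hq h2 hab
        have h2' := dd_edge hq h2 hbc
        omega
      · have h1 := dd_edge hq h2 had
        have h2' := dd_edge hq h2 hdc
        omega
      · push_cast
        rw [dd_cast hp, dd_cast hp, dd_cast hp, dd_cast hp]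
        ring
    omega

end Aux

/-- the winding sum `Δ` is invariant under square-equivalence and
additive under concatenation. -/
theorem winding_invariant {p q : ℕ} (hq : 0 < q) (h2 : 2 * q < p) (h4 : p < 4 * q) :
    (∀ (u v : ZMod (2 * p)) (W W' : (cayleyOdd p q).Walk u v),
        SqEquiv (cayleyOdd p q) W W' → winding p q W = winding p q W') ∧
    (∀ (u v w : ZMod (2 * p)) (W : (cayleyOdd p q).Walk u v)
        (W' : (cayleyOdd p q).Walk v w),
        winding p q (W.append W') = winding p q W + winding p q W') := by
  constructor
  · intro u v W W' h
    induction h with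
    | rel _ _ h => exact winding_sqstep hq h2 h4 h
    | refl _ => rfl
    | symm _ _ _ ih => exact ih.symm
    | trans _ _ _ _ _ ih1 ih2 => exact ih1.trans ih2
  · intro u v w W W'
    exact winding_append' p q W W'
end

section
/- Let p be odd, 2 < p/q < 4, and let K' be the Cayley graph of Z_{2p} with connection set {±1, ±3, ..., ±(p-2q)}. Let c_0, c_1, ..., c_{2n-1}, c_0 be a closed walk in K' of length 2n with n odd, and suppose its winding sum Δ = Σ_{i=0}^{2n-1} d(c_{i+1} - c_i) satisfies Δ ≡ 2 (mod 4). Then there exists an index i ∈ Z_{2n} such that |d(c_i - c_{i+n+1})| ≥ 2q and |d(c_{i+1} - c_{i+n})| ≥ 2q (indices mod 2n). -/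
open SimpleGraph

variable {α β γ : Type*}

lemma darts_get_toProd {G : SimpleGraph α} {u v : α} (W : G.Walk u v) :
    ∀ (i : ℕ) (h : i < W.darts.length),
      (W.darts[i]).toProd = (W.getVert i, W.getVert (i + 1)) := by
  induction W with
  | nil => intro i h; simp [SimpleGraph.Walk.darts] at h
  | cons h' p ih =>
    intro i h
    cases i with
    | zero => simp [SimpleGraph.Walk.darts, SimpleGraph.Walk.getVert]
    | succ i =>
      have h' : i < p.darts.length := by
        simpa [SimpleGraph.Walk.darts] using h
      simpa [SimpleGraph.Walk.darts, SimpleGraph.Walk.getVert] using ih i h'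

lemma dd_intCast {p : ℕ} (hp : 0 < p) {s : ℤ} (h1 : -(p : ℤ) < s) (h2 : s ≤ (p : ℤ)) :
    dd p ((s : ZMod (2 * p))) = s := by
  haveI : NeZero (2 * p) := ⟨by omega⟩
  have hval : (((s : ZMod (2 * p)).val : ℤ)) = s % ((2 * p : ℕ) : ℤ) := ZMod.val_intCast s
  have hmod : s % ((2 * p : ℕ) : ℤ) = s ∨ s % ((2 * p : ℕ) : ℤ) = s + 2 * p := by
    rcases le_or_gt 0 s with hs | hs
    · left
      exact Int.emod_eq_of_lt hs (by push_cast; omega)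
    · right
      have h2 : s + 2 * p = s + ((2 * p : ℕ) : ℤ) * 1 := by push_cast; ring
      have : (s + 2 * p) % ((2 * p : ℕ) : ℤ) = s % ((2 * p : ℕ) : ℤ) := by
        rw [h2, Int.add_mul_emod_self_left]
      rw [← this]
      exact Int.emod_eq_of_lt (by push_cast; omega) (by push_cast; omega)
  unfold dd
  rcases hmod with hm | hm
  · rw [hval, hm, if_pos h2]
  · rw [hval, hm, if_neg (by omega : ¬ (s + 2 * (p : ℤ) ≤ (p : ℤ)))]
    ring

lemma dd_large {p q : ℕ} (hp : 0 < p) (hq : 0 < q) {k : ℤ} (h1 : 2 * (q : ℤ) ≤ k)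
    (h2 : k ≤ 2 * (p : ℤ) - 2 * q) {y : ZMod (2 * p)} (hy : y = ((k : ℤ) : ZMod (2 * p))) :
    2 * (q : ℤ) ≤ |dd p y| := by
  haveI : NeZero (2 * p) := ⟨by omega⟩
  have hq0 : 0 ≤ 2 * (q : ℤ) := by positivity
  have hval : ((y.val : ℤ)) = k % ((2 * p : ℕ) : ℤ) := by
    rw [hy]; exact ZMod.val_intCast k
  have hk : k % ((2 * p : ℕ) : ℤ) = k :=
    Int.emod_eq_of_lt (by omega) (by push_cast; omega)
  rw [hk] at hval
  unfold dd
  split_ifs with h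
  · rw [hval] at h ⊢
    rcases abs_cases k with ⟨he, _⟩ | ⟨he, _⟩ <;> omega
  · rw [hval] at h ⊢
    rcases abs_cases (k - 2 * (p : ℤ)) with ⟨he, _⟩ | ⟨he, _⟩ <;> omega

/-- discrete antipodal lemma. If a closed walk of length `2n` (`n` odd)
in `K'` has winding sum `≡ 2 (mod 4)`, then some pair of (almost) antipodal
vertices along it is far apart: `|d(c_i - c_{i+n+1})| ≥ 2q` and
`|d(c_{i+1} - c_{i+n})| ≥ 2q`. -/
theorem antipodal_lemma {p q n : ℕ} (hq : 0 < q) (h2 : 2 * q < p) (h4 : p < 4 * q)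
    (hp : Odd p) (hn : Odd n) {c : ZMod (2 * p)}
    (W : (cayleyOdd p q).Walk c c) (hlen : W.length = 2 * n)
    (hwind : winding p q W % 4 = 2) :
    ∃ i < 2 * n,
      2 * (q : ℤ) ≤ |dd p (W.getVert (i % (2 * n)) - W.getVert ((i + n + 1) % (2 * n)))| ∧
      2 * (q : ℤ) ≤ |dd p (W.getVert ((i + 1) % (2 * n)) - W.getVert ((i + n) % (2 * n)))| := by
  have hp0 : 0 < p := by omega
  haveI : NeZero (2 * p) := ⟨by omega⟩
  have hn1 : 1 ≤ n := by rcases hn with ⟨t, ht⟩; omega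
  set L : List ℤ := W.darts.map (fun d => dd p (d.toProd.2 - d.toProd.1)) with hLdef
  have hLlen : L.length = 2 * n := by
    rw [hLdef, List.length_map, SimpleGraph.Walk.length_darts, hlen]
  set x : ℕ → ℤ := fun i => (L.take i).sum with hxdef
  have hx0 : x 0 = 0 := by simp [hxdef]
  -- step properties
  have hstep : ∀ i, i < 2 * n →
      |x (i + 1) - x i| ≤ (p : ℤ) - 2 * q ∧
      ((x (i + 1) - x i : ℤ) : ZMod (2 * p)) = W.getVert (i + 1) - W.getVert i := by
    intro i hi
    have hi' : i < L.length := by omega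
    have hiD : i < W.darts.length := by
      rw [SimpleGraph.Walk.length_darts, hlen]; omega
    have hx1 : x (i + 1) = x i + L[i] := by
      simpa [hxdef] using List.sum_take_succ L i hi'
    have hgetL : L[i] = dd p (W.getVert (i + 1) - W.getVert i) := by
      simp only [hLdef, List.getElem_map, darts_get_toProd W i hiD]
    have hadj := (W.darts[i]).adj
    have htp := darts_get_toProd W i hiD
    have hfst : (W.darts[i]).toProd.1 = W.getVert i := by rw [htp]
    have hsnd : (W.darts[i]).toProd.2 = W.getVert (i + 1) := by rw [htp]
    obtain ⟨hne, s, hodd, habs, hs⟩ := hadj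
    rw [hfst, hsnd] at hs
    have habs' : |s| ≤ (p : ℤ) - 2 * q := by
      have h1 : ((s.natAbs : ℕ) : ℤ) ≤ ((p - 2 * q : ℕ) : ℤ) := by exact_mod_cast habs
      have h2 : ((p - 2 * q : ℕ) : ℤ) = (p : ℤ) - 2 * q := by
        have : 2 * q ≤ p := by omega
        push_cast [this]; ring
      rw [Int.abs_eq_natAbs]
      omega
    have hdd : dd p (W.getVert (i + 1) - W.getVert i) = s := by
      rw [hs]
      exact dd_intCast hp0 (by rcases abs_le.mp habs' with ⟨hl, hr⟩; omega)
        (by rcases abs_le.mp habs' with ⟨hl, hr⟩; omega)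
    have hxi : x (i + 1) - x i = s := by rw [hx1, hgetL, hdd]; ring
    constructor
    · rw [hxi]; exact habs'
    · rw [hxi, ← hs]
  -- congruence of lifts with vertices
  have hxc : ∀ i, i ≤ 2 * n → ((x i : ℤ) : ZMod (2 * p)) = W.getVert i - c := by
    intro i
    induction i with
    | zero => intro _; simp [hx0]
    | succ i ih =>
      intro hi
      have h1 := ih (by omega)
      have h2 := (hstep i (by omega)).2
      have : ((x (i + 1) : ℤ) : ZMod (2 * p)) =
          ((x i : ℤ) : ZMod (2 * p)) + ((x (i + 1) - x i : ℤ) : ZMod (2 * p)) := by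
        push_cast; ring
      rw [this, h1, h2]; ring
  -- the winding number
  have hΔ : winding p q W = x (2 * n) := by
    have : L.take (2 * n) = L := by rw [← hLlen]; exact List.take_length
    rw [hxdef]
    simp only [this]
    rfl
  have hgv2n : W.getVert (2 * n) = c := by rw [← hlen]; exact SimpleGraph.Walk.getVert_length W
  have hdvd : ((2 * p : ℕ) : ℤ) ∣ x (2 * n) := by
    rw [← ZMod.intCast_zmod_eq_zero_iff_dvd]
    rw [hxc (2 * n) le_rfl, hgv2n, sub_self]
  obtain ⟨w, hw⟩ := hdvd
  have hwodd : Odd w := by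
    rcases Int.even_or_odd w with he | ho
    · exfalso
      obtain ⟨w2, hw2⟩ := he
      rw [hΔ, hw, hw2] at hwind
      have : ((2 * p : ℕ) : ℤ) * (w2 + w2) = 4 * ((p : ℤ) * w2) := by push_cast; ring
      rw [this] at hwind
      omega
    · exact ho
  obtain ⟨w2, rfl⟩ := hwodd
  have hw' : x (2 * n) = 2 * (p : ℤ) * (2 * w2 + 1) := by rw [hw]; push_cast; ring
  -- the antipodal difference function
  set g : ℕ → ℤ := fun j => x (j + n) - x j - (p : ℤ) * (2 * w2 + 1) with hgdef
  have hg0n : g 0 + g n = 0 := by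
    have hnn : n + n = 2 * n := by omega
    simp only [hgdef]
    rw [Nat.zero_add, hnn, hx0, hw']
    ring
  -- discrete intermediate value: a sign change exists
  have hcross : ∃ j, j < n ∧ g j * g (j + 1) ≤ 0 := by
    by_contra hc
    push_neg at hc
    have key : ∀ j, j ≤ n → 0 < g 0 * g j := by
      intro j hj
      induction j with
      | zero =>
        have h0 := hc 0 (by omega)
        have hne : g 0 ≠ 0 := by
          intro h
          rw [h, zero_mul] at h0
          exact lt_irrefl 0 h0
        exact mul_self_pos.mpr hne
      | succ j ih =>
        have h1 := ih (by omega)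
        have h2 := hc j (by omega)
        nlinarith only [h1, h2, mul_pos h1 h2, sq_nonneg (g j), sq_nonneg (g 0 * g (j + 1))]
    have hfin := key n le_rfl
    have hneg : g n = -g 0 := by linarith only [hg0n]
    rw [hneg] at hfin
    nlinarith only [hfin, sq_nonneg (g 0)]
  obtain ⟨j, hjn, hj0⟩ := hcross
  -- step bounds at j and j+n
  have hs1 := hstep j (by omega)
  have hs2 := hstep (j + n) (by omega)
  obtain ⟨hs1l, hs1r⟩ := abs_le.mp hs1.1
  obtain ⟨hs2l, hs2r⟩ := abs_le.mp hs2.1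
  have hgj : g j = x (j + n) - x j - (p : ℤ) * (2 * w2 + 1) := rfl
  have hgj1 : g (j + 1) = x (j + n + 1) - x (j + 1) - (p : ℤ) * (2 * w2 + 1) := by
    simp only [hgdef]
    rw [show j + 1 + n = j + n + 1 by omega]
  -- |A - pw| ≤ p - 2q and |B - pw| ≤ p - 2q
  have hAB : |x (j + n + 1) - x j - (p : ℤ) * (2 * w2 + 1)| ≤ (p : ℤ) - 2 * q ∧
      |x (j + n) - x (j + 1) - (p : ℤ) * (2 * w2 + 1)| ≤ (p : ℤ) - 2 * q := by
    rcases mul_nonpos_iff.mp hj0 with ⟨h1, h2⟩ | ⟨h1, h2⟩ <;>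
      rw [hgj] at * <;> rw [hgj1] at * <;>
      exact ⟨abs_le.mpr ⟨by linarith, by linarith⟩, abs_le.mpr ⟨by linarith, by linarith⟩⟩
  obtain ⟨hA, hB⟩ := hAB
  obtain ⟨hAl, hAr⟩ := abs_le.mp hA
  obtain ⟨hBl, hBr⟩ := abs_le.mp hB
  -- getVert through mod
  have hmod : ∀ k, k ≤ 2 * n → W.getVert (k % (2 * n)) = W.getVert k := by
    intro k hk
    rcases lt_or_eq_of_le hk with h | h
    · rw [Nat.mod_eq_of_lt h]
    · rw [h, Nat.mod_self, SimpleGraph.Walk.getVert_zero, hgv2n]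
  -- vertex differences as casts of lift differences
  have hvd : ∀ a b, a ≤ 2 * n → b ≤ 2 * n →
      W.getVert a - W.getVert b = ((x a - x b : ℤ) : ZMod (2 * p)) := by
    intro a b ha hb
    have h1 := hxc a ha
    have h2 := hxc b hb
    push_cast
    rw [h1, h2]
    ring
  -- conclude
  refine ⟨j, by omega, ?_, ?_⟩
  · rw [hmod j (by omega), hmod (j + n + 1) (by omega)]
    set k1 : ℤ := (p : ℤ) - (x (j + n + 1) - x j - (p : ℤ) * (2 * w2 + 1)) with hk1
    refine dd_large hp0 hq (k := k1) (by omega) (by omega) ?_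
    rw [hvd j (j + n + 1) (by omega) (by omega)]
    have hdv : ((k1 - (x j - x (j + n + 1)) : ℤ) : ZMod (2 * p)) = 0 := by
      rw [ZMod.intCast_zmod_eq_zero_iff_dvd]
      refine ⟨w2 + 1, ?_⟩
      rw [hk1]; push_cast; ring
    push_cast at hdv ⊢
    linear_combination -hdv
  · rw [hmod (j + 1) (by omega), hmod (j + n) (by omega)]
    set k2 : ℤ := (p : ℤ) - (x (j + n) - x (j + 1) - (p : ℤ) * (2 * w2 + 1)) with hk2
    refine dd_large hp0 hq (k := k2) (by omega) (by omega) ?_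
    rw [hvd (j + 1) (j + n) (by omega) (by omega)]
    have hdv : ((k2 - (x (j + 1) - x (j + n)) : ℤ) : ZMod (2 * p)) = 0 := by
      rw [ZMod.intCast_zmod_eq_zero_iff_dvd]
      refine ⟨w2 + 1, ?_⟩
      rw [hk2]; push_cast; ring
    push_cast at hdv ⊢
    linear_combination -hdv
end

section
/- Odd cycles are multiplicative among circular cliques in the following density/limit sense: if chi_c(G) denotes the circular chromatic number and G × H -> K_{p/q} with p/q rational, 2 ≤ p/q < 4, and if for every rational p'/q' with p/q < p'/q' < 4 and p' odd we have G -> K_{p'/q'} or H -> K_{p'/q'}, then G -> K_{p/q} or H -> K_{p/q}. -/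
open SimpleGraph

variable {α β γ : Type*}

section MyAux


open Filter Topology

private lemma myAux1 {P Q k : ℕ} (hQ : 0 < Q) (hQP : 2 * Q ≤ P) (hk1 : Q ≤ k)
    (hk2 : k ≤ P - Q) {i j : ZMod P} (hc : j = i + (k : ZMod P)) :
    Q ≤ ((i.val : ℤ) - (j.val : ℤ)).natAbs ∧ ((i.val : ℤ) - (j.val : ℤ)).natAbs ≤ P - Q := by
  haveI : NeZero P := ⟨by omega⟩
  have h1 : ((i.val + k : ℕ) : ZMod P) = ((j.val : ℕ) : ZMod P) := by
    push_cast
    rw [ZMod.natCast_val, ZMod.natCast_val, ZMod.cast_id, ZMod.cast_id]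
    exact hc.symm
  have h2 : (↑P : ℤ) ∣ (j.val : ℤ) - (i.val + k : ℕ) :=
    ((ZMod.natCast_eq_natCast_iff _ _ _).mp h1).dvd
  obtain ⟨t, ht⟩ := h2
  have h4 := ZMod.val_lt i
  have h5 := ZMod.val_lt j
  have h7 : t = 0 ∨ t = -1 := by
    rcases lt_or_ge t 0 with h | h
    · have h8 : t ≤ -1 := by omega
      by_contra hcon
      have h9 : t ≤ -2 := by omega
      have : (P : ℤ) * t ≤ (P : ℤ) * (-2) := by
        apply mul_le_mul_of_nonneg_left h9 (by positivity)
      push_cast at ht this ⊢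
      omega
    · by_contra hcon
      have h9 : 1 ≤ t := by omega
      have : (P : ℤ) * 1 ≤ (P : ℤ) * t := by
        apply mul_le_mul_of_nonneg_left h9 (by positivity)
      push_cast at ht this ⊢
      omega
  rcases h7 with rfl | rfl
  · rw [mul_zero] at ht; push_cast at ht; omega
  · rw [mul_neg_one] at ht; push_cast at ht; omega

private lemma circClique_adj_dist {P Q : ℕ} (hQ : 0 < Q) (hQP : 2 * Q ≤ P) {i j : ZMod P}
    (h : (circClique P Q).Adj i j) :
    Q ≤ ((i.val : ℤ) - (j.val : ℤ)).natAbs ∧ ((i.val : ℤ) - (j.val : ℤ)).natAbs ≤ P - Q := by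
  obtain ⟨hne, k, hk1, hk2, hc | hc⟩ := h
  · exact myAux1 hQ hQP hk1 hk2 hc
  · have := myAux1 hQ hQP hk1 hk2 hc
    omega


/-- Rounding a real circular `p/q`-coloring to a hom into `circClique p q`. -/
private lemma myRound {α : Type*} (G : SimpleGraph α) {p q : ℕ} (hq : 0 < q) (h2 : 2 * q ≤ p)
    (x : α → ℝ) (hx : ∀ u v, G.Adj u v → (1 : ℝ) ≤ |x u - x v| ∧ |x u - x v| ≤ (p : ℝ) / q - 1) :
    Nonempty (G →g circClique p q) := by
  have hq' : (0 : ℝ) < q := by positivity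
  refine ⟨⟨fun v => ((⌊(q : ℝ) * x v⌋ : ℤ) : ZMod p), ?_⟩⟩
  intro u v huv
  obtain ⟨hd1, hd2⟩ := hx u v huv
  set a : ℝ := (q : ℝ) * x u with ha
  set b : ℝ := (q : ℝ) * x v with hb
  have hab : a - b = (q : ℝ) * (x u - x v) := by rw [ha, hb]; ring
  have habs : |a - b| = (q : ℝ) * |x u - x v| := by
    rw [hab, abs_mul, abs_of_nonneg hq'.le]
  have hab1 : (q : ℝ) ≤ |a - b| := by
    rw [habs]; nlinarith
  have hab2 : |a - b| ≤ (p : ℝ) - q := by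
    rw [habs]
    have h' : (q : ℝ) * |x u - x v| ≤ (q : ℝ) * ((p : ℝ) / q - 1) := by
      exact mul_le_mul_of_nonneg_left hd2 hq'.le
    have h'' : (q : ℝ) * ((p : ℝ) / q - 1) = (p : ℝ) - q := by
      field_simp
    linarith
  set m : ℤ := ⌊a⌋ - ⌊b⌋ with hm
  have hmr : |(m : ℝ) - (a - b)| < 1 := by
    rw [abs_lt]
    have f1 := Int.floor_le a
    have f2 := Int.floor_le b
    have f3 := Int.sub_one_lt_floor a
    have f4 := Int.sub_one_lt_floor b
    constructor <;> · push_cast [hm]; linarith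
  have hml : (q : ℝ) - 1 < |(m : ℝ)| := by
    have h1 := abs_sub_abs_le_abs_sub (a - b) (m : ℝ)
    have h2 : |a - b - (m : ℝ)| < 1 := by rw [abs_sub_comm]; exact hmr
    linarith
  have hmu : |(m : ℝ)| < (p : ℝ) - q + 1 := by
    have h1 := abs_sub_abs_le_abs_sub (m : ℝ) (a - b)
    linarith
  set k : ℕ := m.natAbs with hk
  have hcast : ((k : ℕ) : ℝ) = |(m : ℝ)| := by
    rw [hk, Nat.cast_natAbs, Int.cast_abs]
  have hk1 : q ≤ k := by
    have : (q : ℝ) < (k : ℝ) + 1 := by rw [hcast]; linarith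
    have : q < k + 1 := by exact_mod_cast this
    omega
  have hqp : q ≤ p := by omega
  have hk2 : k ≤ p - q := by
    have : (k : ℝ) < ((p - q : ℕ) : ℝ) + 1 := by
      rw [hcast, Nat.cast_sub hqp]; push_cast; linarith
    have : k < (p - q) + 1 := by exact_mod_cast this
    omega
  have hor : ((⌊b⌋ : ℤ) : ZMod p) = ((⌊a⌋ : ℤ) : ZMod p) + (k : ZMod p) ∨
      ((⌊a⌋ : ℤ) : ZMod p) = ((⌊b⌋ : ℤ) : ZMod p) + (k : ZMod p) := by
    rcases Int.natAbs_eq m with hmm | hmm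
    · right
      have : (⌊a⌋ : ℤ) = ⌊b⌋ + (k : ℤ) := by omega
      rw [this]; push_cast; ring
    · left
      have : (⌊b⌋ : ℤ) = ⌊a⌋ + (k : ℤ) := by omega
      rw [this]; push_cast; ring
  have hnep : ((⌊a⌋ : ℤ) : ZMod p) ≠ ((⌊b⌋ : ℤ) : ZMod p) := by
    intro hEq
    have hk0 : ((k : ℕ) : ZMod p) = 0 := by
      rcases hor with h | h
      · rw [hEq] at h; exact (left_eq_add.mp h)
      · rw [hEq] at h; exact (left_eq_add.mp h)
    have hdvd := (ZMod.natCast_eq_zero_iff k p).mp hk0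
    have := Nat.le_of_dvd (by omega) hdvd
    omega
  exact ⟨hnep, k, hk1, hk2, hor⟩

private lemma myKey {α : Type*} [Fintype α] (G : SimpleGraph α) {p q : ℕ} (hq : 0 < q)
    (h2 : 2 * q ≤ p)
    (h : ∀ n : ℕ, ∃ m : ℕ, n ≤ m ∧ 0 < m ∧
      Nonempty (G →g circClique (2 * p * m + 1) (2 * q * m))) :
    Nonempty (G →g circClique p q) := by
  classical
  choose g hg hgpos hne using h
  have hc : ∀ n, G →g circClique (2 * p * (g n) + 1) (2 * q * (g n)) := fun n => (hne n).some
  set y : ℕ → α → ℝ := fun n v => (((hc n) v).val : ℝ) / (2 * q * (g n) : ℕ) with hy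
  have hden : ∀ n, (0 : ℝ) < ((2 * q * g n : ℕ) : ℝ) := by
    intro n
    have : 0 < 2 * q * g n := Nat.mul_pos (Nat.mul_pos two_pos hq) (hgpos n)
    exact_mod_cast this
  have hQP : ∀ n, 2 * (2 * q * g n) ≤ 2 * p * g n + 1 := by
    intro n; nlinarith [hgpos n]
  have hyIcc : ∀ n, y n ∈ Set.pi Set.univ (fun _ : α => Set.Icc (0 : ℝ) ((p : ℝ) / q)) := by
    intro n v _
    constructor
    · apply div_nonneg (by positivity) (hden n).le
    · haveI : NeZero (2 * p * g n + 1) := ⟨by omega⟩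
      have hval := ZMod.val_lt ((hc n) v)
      have hval' : (((hc n) v).val : ℝ) ≤ ((2 * p * g n : ℕ) : ℝ) := by
        have : ((hc n) v).val ≤ 2 * p * g n := by omega
        exact_mod_cast this
      have heq : ((2 * p * g n : ℕ) : ℝ) / ((2 * q * g n : ℕ) : ℝ) = (p : ℝ) / q := by
        have hg0 : (0 : ℝ) < (g n : ℝ) := by exact_mod_cast hgpos n
        have hq0 : (0 : ℝ) < (q : ℝ) := by positivity
        push_cast
        field_simp
      rw [hy, ← heq]
      exact (div_le_div_iff_of_pos_right (hden n)).mpr hval'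
  -- adjacency estimates at level n
  have hadjn : ∀ n u v, G.Adj u v → (1 : ℝ) ≤ |y n u - y n v| ∧
      |y n u - y n v| ≤ ((2 * p * g n + 1 : ℕ) : ℝ) / ((2 * q * g n : ℕ) : ℝ) - 1 := by
    intro n u v huv
    have hQ0 : 0 < 2 * q * g n := Nat.mul_pos (Nat.mul_pos two_pos hq) (hgpos n)
    obtain ⟨hd1, hd2⟩ := circClique_adj_dist hQ0 (hQP n) ((hc n).map_rel huv)
    set i : ℕ := ((hc n) u).val with hi
    set j : ℕ := ((hc n) v).val with hj
    have hdiff : y n u - y n v = ((i : ℝ) - (j : ℝ)) / ((2 * q * g n : ℕ) : ℝ) := by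
      rw [hy]; ring
    have habs : |y n u - y n v| =
        ((((i : ℤ) - (j : ℤ)).natAbs : ℕ) : ℝ) / ((2 * q * g n : ℕ) : ℝ) := by
      rw [hdiff, abs_div, abs_of_pos (hden n), Nat.cast_natAbs, Int.cast_abs]
      push_cast
      ring_nf
    constructor
    · rw [habs, le_div_iff₀ (hden n), one_mul]
      exact_mod_cast hd1
    · rw [habs]
      have hsub : ((2 * p * g n + 1 : ℕ) : ℝ) / ((2 * q * g n : ℕ) : ℝ) - 1 =
          (((2 * p * g n + 1 - 2 * q * g n : ℕ) : ℕ) : ℝ) / ((2 * q * g n : ℕ) : ℝ) := by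
        rw [Nat.cast_sub (by nlinarith [hgpos n] : 2 * q * g n ≤ 2 * p * g n + 1)]
        have hg0 : (0 : ℝ) < (g n : ℝ) := by exact_mod_cast hgpos n
        have hq0 : (0 : ℝ) < (q : ℝ) := by positivity
        push_cast
        field_simp
      rw [hsub]
      apply (div_le_div_iff_of_pos_right (hden n)).mpr
      exact_mod_cast hd2
  -- compactness
  obtain ⟨x, -, φ, hφ, hlim⟩ :=
    (isCompact_univ_pi (fun _ : α => isCompact_Icc)).tendsto_subseq hyIcc
  have hlimv : ∀ v, Tendsto (fun k => y (φ k) v) atTop (𝓝 (x v)) := by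
    intro v
    exact (tendsto_pi_nhds.mp hlim v)
  -- ratio limit
  have hgmono : ∀ k : ℕ, (k : ℕ) ≤ 2 * q * g (φ k) := by
    intro k
    calc k ≤ φ k := hφ.le_apply
    _ ≤ g (φ k) := hg _
    _ ≤ 2 * q * g (φ k) := Nat.le_mul_of_pos_left _ (by omega)
  have hFtop : Tendsto (fun k : ℕ => (2 * q * g (φ k) : ℕ)) atTop atTop :=
    tendsto_atTop_mono hgmono tendsto_id
  have hinv : Tendsto (fun k : ℕ => 1 / ((2 * q * g (φ k) : ℕ) : ℝ)) atTop (𝓝 0) :=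
    tendsto_one_div_atTop_nhds_zero_nat.comp hFtop
  have hreq : ∀ k : ℕ, ((2 * p * g (φ k) + 1 : ℕ) : ℝ) / ((2 * q * g (φ k) : ℕ) : ℝ) =
      (p : ℝ) / q + 1 / ((2 * q * g (φ k) : ℕ) : ℝ) := by
    intro k
    have hg0 : (0 : ℝ) < (g (φ k) : ℝ) := by exact_mod_cast hgpos (φ k)
    have hq0 : (0 : ℝ) < (q : ℝ) := by positivity
    push_cast
    field_simp
  have hr : Tendsto (fun k : ℕ =>
      ((2 * p * g (φ k) + 1 : ℕ) : ℝ) / ((2 * q * g (φ k) : ℕ) : ℝ) - 1) atTop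
      (𝓝 ((p : ℝ) / q - 1)) := by
    have h1 : Tendsto (fun k : ℕ => (p : ℝ) / q + 1 / ((2 * q * g (φ k) : ℕ) : ℝ)) atTop
        (𝓝 ((p : ℝ) / q + 0)) := tendsto_const_nhds.add hinv
    rw [add_zero] at h1
    have h2 := h1.sub (tendsto_const_nhds (x := (1 : ℝ)))
    refine h2.congr ?_
    intro k
    rw [hreq k]
  -- limit distance conditions
  have hxcond : ∀ u v, G.Adj u v → (1 : ℝ) ≤ |x u - x v| ∧ |x u - x v| ≤ (p : ℝ) / q - 1 := by
    intro u v huv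
    have hTd : Tendsto (fun k => |y (φ k) u - y (φ k) v|) atTop (𝓝 |x u - x v|) :=
      ((hlimv u).sub (hlimv v)).abs
    constructor
    · exact ge_of_tendsto hTd (Filter.Eventually.of_forall fun k => (hadjn (φ k) u v huv).1)
    · exact le_of_tendsto_of_tendsto' hTd hr (fun k => (hadjn (φ k) u v huv).2)
  exact myRound G hq h2 x hxcond

end MyAux

/-- density/limit argument for circular cliques. If `G × H → K_{p/q}`
with `2 ≤ p/q < 4` and for every rational `p'/q'` with `p/q < p'/q' < 4` and `p'` odd
we have `G → K_{p'/q'}` or `H → K_{p'/q'}`, then `G → K_{p/q}` or `H → K_{p/q}`. -/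
theorem circClique_limit {G : SimpleGraph α} {H : SimpleGraph β}
    [Fintype α] [Fintype β] {p q : ℕ} (hq : 0 < q) (h2 : 2 * q ≤ p) (h4 : p < 4 * q)
    (hmu : Nonempty (tensor G H →g circClique p q))
    (hdense : ∀ p' q' : ℕ, 0 < q' → Odd p' → p * q' < p' * q → p' < 4 * q' →
      Nonempty (G →g circClique p' q') ∨ Nonempty (H →g circClique p' q')) :
    Nonempty (G →g circClique p q) ∨ Nonempty (H →g circClique p q) := by
  by_cases hG : ∀ n : ℕ, ∃ m : ℕ, n ≤ m ∧ 0 < m ∧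
      Nonempty (G →g circClique (2 * p * m + 1) (2 * q * m))
  · exact Or.inl (myKey G hq h2 hG)
  · push_neg at hG
    obtain ⟨N, hN⟩ := hG
    refine Or.inr (myKey H hq h2 ?_)
    intro n
    set m : ℕ := max n N + 1 with hm
    have hm1 : 0 < m := by omega
    have hQ0 : 0 < 2 * q * m := Nat.mul_pos (Nat.mul_pos two_pos hq) hm1
    have hodd : Odd (2 * p * m + 1) := ⟨p * m, by ring⟩
    have hlt1 : p * (2 * q * m) < (2 * p * m + 1) * q := by nlinarith
    have hlt2 : 2 * p * m + 1 < 4 * (2 * q * m) := by nlinarith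
    rcases hdense (2 * p * m + 1) (2 * q * m) hQ0 hodd hlt1 hlt2 with h | h
    · exact absurd h (not_nonempty_iff.mpr (hN m (by omega) hm1))
    · exact ⟨m, by omega, hm1, h⟩
end

section
/- Let mu : G × H -> K be a graph homomorphism with K square-free, G and H connected, G non-bipartite, and suppose mu has no H-extremal sets. If mu is constant on V(G) × {h} for some vertex h of H, then mu factors through the projection to H: there is a graph homomorphism gamma : H -> K with mu(g,h) = gamma(h) for all g, h. -/
open SimpleGraph

variable {α β γ : Type*}

/-- `(S, h0h1)` is an `H`-extremal set for `mu : G × H → K`: `S ⊆ V(G) × {h1}` is a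
nonempty monochromatic set whose neighborhood in `G × h0h1` is monochromatic and
whose second neighborhood is nonempty and avoids the color of `S`. -/
def HExtremal {G : SimpleGraph α} {H : SimpleGraph β} {K : SimpleGraph γ}
    (mu : tensor G H →g K) (h0 h1 : β) (S : Set α) : Prop :=
  H.Adj h0 h1 ∧ S.Nonempty ∧
  ∃ a b : γ,
    (∀ g ∈ S, mu (g, h1) = a) ∧
    (∀ g' ∈ {g' : α | ∃ g ∈ S, G.Adj g g'}, mu (g', h0) = b) ∧
    ({x : α | x ∉ S ∧ ∃ g' ∈ {g' : α | ∃ g ∈ S, G.Adj g g'}, G.Adj g' x}).Nonempty ∧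
    (∀ x ∈ {x : α | x ∉ S ∧ ∃ g' ∈ {g' : α | ∃ g ∈ S, G.Adj g g'}, G.Adj g' x},
      mu (x, h1) ≠ a)

section Aux

open Classical in
lemma exists_odd_closed_walk {G : SimpleGraph α} (hG : G.Connected) (hGnb : ¬ G.Colorable 2)
    (r : α) : ∃ W : G.Walk r r, Odd W.length := by
  by_contra hno
  push_neg at hno
  apply hGnb
  refine ⟨SimpleGraph.Coloring.mk
    (fun v => if ∃ p : G.Walk r v, Even p.length then (0 : Fin 2) else 1) ?_⟩
  intro u v huv hcuv
  by_cases hu : ∃ p : G.Walk r u, Even p.length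
  · by_cases hv : ∃ p : G.Walk r v, Even p.length
    · obtain ⟨p, hp⟩ := hu
      obtain ⟨q, hq⟩ := hv
      have := hno (p.append ((SimpleGraph.Walk.cons huv q.reverse)))
      rw [SimpleGraph.Walk.length_append, SimpleGraph.Walk.length_cons,
        SimpleGraph.Walk.length_reverse] at this
      obtain ⟨a, ha⟩ := hp; obtain ⟨b, hb⟩ := hq
      exact this ⟨a + b, by omega⟩
    · simp [hu, hv] at hcuv
  · by_cases hv : ∃ p : G.Walk r v, Even p.length
    · simp [hu, hv] at hcuv
    · push_neg at hu hv
      obtain ⟨p⟩ := hG r u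
      obtain ⟨q⟩ := hG r v
      have hp := hu p
      have hq := hv q
      rw [Nat.not_even_iff_odd] at hp hq
      have := hno (p.append ((SimpleGraph.Walk.cons huv q.reverse)))
      rw [SimpleGraph.Walk.length_append, SimpleGraph.Walk.length_cons,
        SimpleGraph.Walk.length_reverse] at this
      obtain ⟨a, ha⟩ := hp; obtain ⟨b, hb⟩ := hq
      exact this ⟨a + b + 1, by omega⟩

lemma exists_even_walk {G : SimpleGraph α} (hG : G.Connected) (hGnb : ¬ G.Colorable 2)
    (x y : α) : ∃ p : G.Walk x y, Even p.length := by
  obtain ⟨W, hW⟩ := exists_odd_closed_walk hG hGnb x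
  obtain ⟨p⟩ := hG x y
  rcases Nat.even_or_odd p.length with hp | hp
  · exact ⟨p, hp⟩
  · refine ⟨W.append p, ?_⟩
    rw [SimpleGraph.Walk.length_append]
    obtain ⟨a, ha⟩ := hW; obtain ⟨b, hb⟩ := hp
    exact ⟨a + b + 1, by omega⟩

lemma mem_of_even_walk {G : SimpleGraph α} {S : Set α}
    (hS : ∀ ⦃g g' x : α⦄, g ∈ S → G.Adj g g' → G.Adj g' x → x ∈ S) :
    ∀ {u y : α} (p : G.Walk u y), Even p.length → u ∈ S → y ∈ S
  | _, _, SimpleGraph.Walk.nil, _, hu => hu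
  | _, _, SimpleGraph.Walk.cons _ SimpleGraph.Walk.nil, he, _ => by
      simp [Nat.even_add_one] at he
  | _, _, SimpleGraph.Walk.cons h (SimpleGraph.Walk.cons h' q), he, hu => by
      refine mem_of_even_walk hS q ?_ (hS hu h h')
      rw [SimpleGraph.Walk.length_cons, SimpleGraph.Walk.length_cons] at he
      obtain ⟨a, ha⟩ := he
      exact ⟨a - 1, by omega⟩

end Aux

/-- if `K` is square-free, `G, H` connected, `G` non-bipartite, `mu` has
no `H`-extremal sets and is constant on some column `V(G) × {h}`, then `mu` factors
through the projection to `H`. -/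
theorem constant_column_factors {G : SimpleGraph α} {H : SimpleGraph β} {K : SimpleGraph γ}
    (hK : SqFree K) (hG : G.Connected) (hH : H.Connected) (hGnb : ¬ G.Colorable 2)
    (mu : tensor G H →g K)
    (hext : ∀ (h0 h1 : β) (S : Set α), ¬ HExtremal mu h0 h1 S)
    (h : β) (hconst : ∀ g g' : α, mu (g, h) = mu (g', h)) :
    ∃ gamma : H →g K, ∀ (g : α) (hh : β), mu (g, hh) = gamma hh := by
  obtain ⟨g0⟩ := hG.nonempty
  -- propagation lemma: constancy on a column spreads to adjacent columns
  have step : ∀ h0 h1 : β, H.Adj h0 h1 → (∀ g g' : α, mu (g, h1) = mu (g', h1)) →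
      ∀ g g' : α, mu (g, h0) = mu (g', h0) := by
    intro h0 h1 hadj hcol
    set S : Set α := {g : α | mu (g, h0) = mu (g0, h0)} with hSdef
    have hclos : ∀ ⦃g g' x : α⦄, g ∈ S → G.Adj g g' → G.Adj g' x → x ∈ S := by
      intro g g' x hg hgg' hg'x
      by_contra hx
      refine hext h1 h0 S ⟨hadj.symm, ⟨g0, rfl⟩, mu (g0, h0), mu (g0, h1),
        (fun z hz => hz), (fun z _ => hcol z g0), ⟨x, hx, g', ⟨g, hg, hgg'⟩, hg'x⟩,
        (fun z hz => hz.1)⟩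
    have hall : ∀ x : α, x ∈ S := by
      intro x
      obtain ⟨p, hp⟩ := exists_even_walk hG hGnb g0 x
      exact mem_of_even_walk hclos p hp rfl
    intro g g'
    exact (hall g).trans (hall g').symm
  -- constancy on every column
  have prop : ∀ {x y : β} (_ : H.Walk x y), (∀ g g' : α, mu (g, x) = mu (g', x)) →
      ∀ g g' : α, mu (g, y) = mu (g', y) := by
    intro x y w
    induction w with
    | nil => exact fun hx => hx
    | cons hadj p ih =>
      intro hx
      exact ih (step _ _ hadj.symm hx)
  have hcolconst : ∀ hh : β, ∀ g g' : α, mu (g, hh) = mu (g', hh) := by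
    intro hh
    obtain ⟨w⟩ := hH h hh
    exact prop w hconst
  -- g0 has a neighbour (odd closed walk has positive length)
  obtain ⟨g1, hg01⟩ : ∃ g1 : α, G.Adj g0 g1 := by
    obtain ⟨W, hW⟩ := exists_odd_closed_walk hG hGnb g0
    cases W with
    | nil => simp at hW
    | cons hadj p => exact ⟨_, hadj⟩
  refine ⟨⟨fun hh => mu (g0, hh), ?_⟩, fun g hh => hcolconst hh g g0⟩
  intro a b hab
  have : K.Adj (mu (g0, a)) (mu (g1, b)) := mu.map_adj ⟨hg01, hab⟩
  rwa [hcolconst b g1 g0] at this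
end
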